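/- The function κ̂(z,w) := e^{(z−w)²} f(z,w), with f(z,w) := (1/√2)∫_{−∞}^{0}[e^{−2(z−u)²}erfc(√2(w−u)) − e^{−2(w−u)²}erfc(√2(z−u))]du, satisfies the first-order ODE ∂_z κ̂(z,w) = 2(z−w) κ̂(z,w) + erfc(z+w) − (1/√2) e^{(z−w)²−2z²} erfc(√2 w). -/

import Mathlib

open MeasureTheory Real Set Filter Metric
open scoped Topology

/-- The complementary error function extended to complex arguments. -/
noncomputable def cerfc (z : ℂ) : ℂ :=
  1 - (2 / (Real.sqrt Real.pi : ℂ)) * ∫ t in (0:ℝ)..1, z * Complex.exp (-((t : ℂ) * z) ^ 2)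

/-- `f(z,w) = (1/√2) ∫_{-∞}^0 [e^{-2(z-u)²} erfc(√2(w-u)) - e^{-2(w-u)²} erfc(√2(z-u))] du`. -/
noncomputable def fEdge (z w : ℂ) : ℂ :=
  (1 / (Real.sqrt 2 : ℂ)) * ∫ u in Set.Iio (0:ℝ),
    (Complex.exp (-2 * (z - (u : ℂ)) ^ 2) * cerfc ((Real.sqrt 2 : ℂ) * (w - (u : ℂ)))
      - Complex.exp (-2 * (w - (u : ℂ)) ^ 2) * cerfc ((Real.sqrt 2 : ℂ) * (z - (u : ℂ))))

/-- `κ̂(z,w) = e^{(z-w)²} f(z,w)`. -/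
noncomputable def kappaHat (z w : ℂ) : ℂ := Complex.exp ((z - w) ^ 2) * fEdge z w

section Helpers

lemma cerfc_zero : cerfc 0 = 1 := by simp [cerfc]

lemma aux_hasDerivAt (a s : ℂ) :
    HasDerivAt (fun s : ℂ => s * Complex.exp (-(s * a) ^ 2))
      ((1 - 2 * (s * a) ^ 2) * Complex.exp (-(s * a) ^ 2)) s := by
  have h1 : HasDerivAt (fun s : ℂ => -(s * a) ^ 2) (-(2 * (s * a) * a)) s := by
    have := (((hasDerivAt_id s).mul_const a).pow 2).neg
    simp at this
    exact this
  have h3 := (hasDerivAt_id s).mul h1.cexp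
  refine h3.congr_deriv (Eq.symm ?_)
  simp only [id_eq]
  ring

lemma cont_aux (a : ℂ) : Continuous (fun t : ℝ => (1 - 2 * ((t:ℂ) * a) ^ 2) * Complex.exp (-((t:ℂ) * a) ^ 2)) := by
  continuity

lemma hasDerivAt_integral_cerfc (z : ℂ) :
    HasDerivAt (fun z : ℂ => ∫ t in (0:ℝ)..1, z * Complex.exp (-((t : ℂ) * z) ^ 2))
      (Complex.exp (-z ^ 2)) z := by
  have key := intervalIntegral.hasDerivAt_integral_of_dominated_loc_of_deriv_le
    (F := fun z (t : ℝ) => z * Complex.exp (-((t:ℂ) * z) ^ 2))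
    (F' := fun z (t : ℝ) => (1 - 2 * ((t:ℂ) * z) ^ 2) * Complex.exp (-((t:ℂ) * z) ^ 2))
    (x₀ := z) (a := (0:ℝ)) (b := (1:ℝ)) (μ := volume)
    (bound := fun _ => (1 + 2 * (‖z‖ + 1) ^ 2) * Real.exp ((‖z‖ + 1) ^ 2))
    (s := ball z 1) (ball_mem_nhds z one_pos)
    ?_ ?_ ?_ ?_ ?_ ?_
  · obtain ⟨-, h⟩ := key
    refine h.congr_deriv (Eq.symm ?_)
    rw [intervalIntegral.integral_eq_sub_of_hasDerivAt
      (f := fun t : ℝ => (t : ℂ) * Complex.exp (-((t:ℂ) * z) ^ 2))]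
    · simp
    · intro t _
      exact (aux_hasDerivAt z (t:ℂ)).comp_ofReal
    · exact (cont_aux z).intervalIntegrable _ _
  · filter_upwards with x
    exact (Continuous.aestronglyMeasurable (by continuity)).restrict
  · exact (Continuous.intervalIntegrable (by continuity) _ _)
  · exact (Continuous.aestronglyMeasurable (cont_aux z)).restrict
  · filter_upwards with t ht x hx
    have ht' : t ∈ Set.Ioc (0:ℝ) 1 := by
      simpa [Set.uIoc_of_le (zero_le_one : (0:ℝ) ≤ 1)] using ht
    have hx' : ‖x‖ ≤ ‖z‖ + 1 := by
      have hb := mem_ball_iff_norm.mp hx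
      have h0 : x = z + (x - z) := by ring
      rw [h0]
      exact (norm_add_le _ _).trans (by linarith)
    have htz : ‖(t:ℂ) * x‖ ≤ ‖z‖ + 1 := by
      rw [norm_mul, Complex.norm_real]
      calc ‖t‖ * ‖x‖ ≤ 1 * ‖x‖ := by
            apply mul_le_mul_of_nonneg_right _ (norm_nonneg x)
            rw [Real.norm_eq_abs, abs_of_pos ht'.1]; exact ht'.2
        _ ≤ ‖z‖ + 1 := by simpa using hx'
    rw [norm_mul]
    have h1 : ‖(1 : ℂ) - 2 * ((t:ℂ) * x) ^ 2‖ ≤ 1 + 2 * (‖z‖ + 1) ^ 2 := by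
      calc ‖(1 : ℂ) - 2 * ((t:ℂ) * x) ^ 2‖ ≤ ‖(1:ℂ)‖ + ‖(2:ℂ) * ((t:ℂ) * x) ^ 2‖ := norm_sub_le _ _
        _ ≤ 1 + 2 * (‖z‖ + 1) ^ 2 := by
            rw [norm_mul, norm_pow]
            simp only [norm_one, Complex.norm_ofNat]
            have : ‖(t:ℂ) * x‖ ^ 2 ≤ (‖z‖ + 1) ^ 2 := by
              apply pow_le_pow_left₀ (norm_nonneg _) htz
            nlinarith
    have h2 : ‖Complex.exp (-((t:ℂ) * x) ^ 2)‖ ≤ Real.exp ((‖z‖ + 1) ^ 2) := by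
      rw [Complex.norm_exp]
      apply Real.exp_le_exp.mpr
      have hre : (-((t:ℂ) * x) ^ 2).re ≤ ‖((t:ℂ) * x) ^ 2‖ := by
        rw [Complex.neg_re]
        calc -(((t:ℂ) * x) ^ 2).re ≤ |(((t:ℂ) * x) ^ 2).re| := neg_le_abs _
          _ ≤ ‖((t:ℂ) * x) ^ 2‖ := Complex.abs_re_le_norm _
      refine hre.trans ?_
      rw [norm_pow]
      apply pow_le_pow_left₀ (norm_nonneg _) htz
    exact mul_le_mul h1 h2 (norm_nonneg _) (by positivity)
  · exact intervalIntegrable_const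
  · filter_upwards with t ht x hx
    have h := aux_hasDerivAt (t:ℂ) x
    have hfun : (fun x : ℂ => x * Complex.exp (-((t:ℂ) * x) ^ 2))
        = fun s : ℂ => s * Complex.exp (-(s * (t:ℂ)) ^ 2) := by
      funext s; rw [mul_comm ((t:ℂ)) s]
    show HasDerivAt (fun x : ℂ => x * Complex.exp (-((t:ℂ) * x) ^ 2)) _ x
    rw [hfun, mul_comm ((t:ℂ)) x]
    exact h

lemma hasDerivAt_cerfc (z : ℂ) :
    HasDerivAt cerfc (-(2 / (Real.sqrt Real.pi : ℂ)) * Complex.exp (-z^2)) z := by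
  have h := ((hasDerivAt_integral_cerfc z).const_mul (2 / (Real.sqrt Real.pi : ℂ))).const_sub 1
  refine h.congr_deriv (Eq.symm ?_)
  ring

lemma cerfc_norm_le (a : ℂ) :
    ‖cerfc a‖ ≤ 1 + (2 / Real.sqrt Real.pi) * (‖a‖ * Real.exp (max 0 (-(a^2).re))) := by
  have hπ : (0:ℝ) < Real.sqrt Real.pi := Real.sqrt_pos.mpr Real.pi_pos
  have hI : ‖∫ t in (0:ℝ)..1, a * Complex.exp (-((t : ℂ) * a) ^ 2)‖
      ≤ (‖a‖ * Real.exp (max 0 (-(a^2).re))) * |1 - 0| := by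
    apply intervalIntegral.norm_integral_le_of_norm_le_const
    intro t ht
    have ht' : t ∈ Set.Ioc (0:ℝ) 1 := by
      simpa [Set.uIoc_of_le (zero_le_one : (0:ℝ) ≤ 1)] using ht
    rw [norm_mul]
    apply mul_le_mul_of_nonneg_left _ (norm_nonneg a)
    rw [Complex.norm_exp]
    apply Real.exp_le_exp.mpr
    have hre : (-((t:ℂ) * a) ^ 2).re = -(t^2 * (a^2).re) := by
      have : -((t:ℂ) * a) ^ 2 = ((-(t^2) : ℝ) : ℂ) * a ^ 2 := by push_cast; ring
      rw [this, Complex.re_ofReal_mul]; ring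
    rw [hre]
    rcases le_or_gt 0 ((a^2).re) with h | h
    · have : -(t^2 * (a^2).re) ≤ 0 := by nlinarith
      exact this.trans (le_max_left _ _)
    · have ht2 : t^2 ≤ 1 := by nlinarith [ht'.1, ht'.2]
      have : -(t^2 * (a^2).re) ≤ -(a^2).re := by nlinarith
      exact this.trans (le_max_right _ _)
  have : ‖cerfc a‖ ≤ ‖(1:ℂ)‖ + ‖(2 / (Real.sqrt Real.pi : ℂ)) * ∫ t in (0:ℝ)..1, a * Complex.exp (-((t : ℂ) * a) ^ 2)‖ :=
    norm_sub_le _ _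
  refine this.trans ?_
  rw [norm_one, norm_mul]
  gcongr
  · rw [norm_div]
    simp [Complex.norm_real, abs_of_pos hπ]
  · simpa using hI

lemma sq_re (ζ : ℂ) : (ζ^2).re = ζ.re^2 - ζ.im^2 := by
  simp [pow_two, Complex.mul_re]

lemma norm_g (z : ℂ) (u : ℝ) :
    ‖Complex.exp (-2*(z-(u:ℂ))^2)‖ = Real.exp (-2*((z.re-u)^2 - z.im^2)) := by
  rw [Complex.norm_exp]
  congr 1
  have : (-2*(z-(u:ℂ))^2).re = -2 * ((z-(u:ℂ))^2).re := by
    simp [Complex.mul_re]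
  rw [this, sq_re]
  simp [Complex.sub_re, Complex.sub_im]

lemma norm_g_le_const (z : ℂ) (u : ℝ) :
    ‖Complex.exp (-2*(z-(u:ℂ))^2)‖ ≤ Real.exp (2*z.im^2) := by
  rw [norm_g]
  apply Real.exp_le_exp.mpr
  nlinarith [sq_nonneg (z.re - u)]

lemma norm_g_unif {R : ℝ} {z : ℂ} (hz : ‖z‖ ≤ R) {u : ℝ} (hu : u ≤ 0) :
    ‖Complex.exp (-2*(z-(u:ℂ))^2)‖ ≤ Real.exp (2*R^2) * Real.exp (-2*u^2 - 4*R*u) := by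
  rw [norm_g, ← Real.exp_add]
  apply Real.exp_le_exp.mpr
  have h1 : |z.re| ≤ R := (Complex.abs_re_le_norm z).trans hz
  have h2 : |z.im| ≤ R := (Complex.abs_im_le_norm z).trans hz
  have h3 : z.im^2 ≤ R^2 := by nlinarith [sq_abs z.im, abs_nonneg z.im]
  have h4 : -R ≤ z.re := by cases abs_le.mp h1; linarith
  have h5 : z.re ≤ R := by cases abs_le.mp h1; linarith
  nlinarith [mul_nonneg (neg_nonneg.mpr hu) (by linarith : (0:ℝ) ≤ z.re + R), sq_nonneg z.re]

lemma poly_gauss_le (u : ℝ) : (1+|u|)^2 * Real.exp (-u^2) ≤ 4 := by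
  have hE : Real.exp (u^2) * Real.exp (-u^2) = 1 := by rw [← Real.exp_add]; simp
  nlinarith [Real.add_one_le_exp (u^2), Real.exp_pos (-u^2), Real.exp_pos (u^2),
    sq_nonneg (|u| - 1), sq_abs u, abs_nonneg u]

lemma integrable_bound (c K : ℝ) :
    Integrable (fun u : ℝ => K * ((1+|u|)^2 * Real.exp (-2*u^2 - c*u))) := by
  apply Integrable.const_mul
  have hint : Integrable (fun u : ℝ => 4 * (Real.exp (c^2/4) * Real.exp (-(u + c/2)^2))) := by
    apply Integrable.const_mul
    apply Integrable.const_mul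
    have h := integrable_exp_neg_mul_sq (one_pos)
    simpa using h.comp_add_right (c/2)
  apply hint.mono'
  · apply Continuous.aestronglyMeasurable
    continuity
  · filter_upwards with u
    rw [Real.norm_eq_abs, abs_of_nonneg (by positivity)]
    have key : (1+|u|)^2 * Real.exp (-2*u^2 - c*u)
        ≤ 4 * Real.exp (-u^2 - c*u) := by
      have : Real.exp (-2*u^2 - c*u) = Real.exp (-u^2) * Real.exp (-u^2 - c*u) := by
        rw [← Real.exp_add]; ring_nf
      rw [this, ← mul_assoc]
      apply mul_le_mul_of_nonneg_right _ (Real.exp_nonneg _)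
      exact poly_gauss_le u
    refine key.trans (le_of_eq ?_)
    rw [← Real.exp_add]
    ring_nf

lemma tendsto_bound_atBot (c K : ℝ) :
    Tendsto (fun u : ℝ => K * ((1+|u|)^2 * Real.exp (-2*u^2 - c*u))) atBot (𝓝 0) := by
  have h0 : Tendsto (fun u : ℝ => -u^2 - c*u) atBot atBot := by
    apply Filter.tendsto_atBot_mono' atBot _ tendsto_id
    filter_upwards [eventually_le_atBot (min 0 (-(c+1)))] with u hu
    have h1 : u ≤ 0 := hu.trans (min_le_left _ _)
    have h2 : u ≤ -(c+1) := hu.trans (min_le_right _ _)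
    show -u^2 - c*u ≤ u
    nlinarith [mul_nonneg (neg_nonneg.mpr h1) (by linarith : (0:ℝ) ≤ -(u + c + 1))]
  have hexp : Tendsto (fun u : ℝ => Real.exp (-u^2 - c*u)) atBot (𝓝 0) :=
    Real.tendsto_exp_atBot.comp h0
  have hsq : Tendsto (fun u : ℝ => (1+|u|)^2 * Real.exp (-2*u^2 - c*u)) atBot (𝓝 0) := by
    apply squeeze_zero' (by filter_upwards with u; positivity)
      (g := fun u => 4 * Real.exp (-u^2 - c*u))
    · filter_upwards with u
      have : Real.exp (-2*u^2 - c*u) = Real.exp (-u^2) * Real.exp (-u^2 - c*u) := by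
        rw [← Real.exp_add]; ring_nf
      rw [this, ← mul_assoc]
      exact mul_le_mul_of_nonneg_right (poly_gauss_le u) (Real.exp_nonneg _)
    · simpa using hexp.const_mul 4
  simpa using hsq.const_mul K

lemma norm_g4 (z : ℂ) (u : ℝ) :
    ‖Complex.exp (-4*(z-(u:ℂ))^2)‖ = Real.exp (-4*((z.re-u)^2 - z.im^2)) := by
  rw [Complex.norm_exp]
  congr 1
  have : (-4*(z-(u:ℂ))^2).re = -4 * ((z-(u:ℂ))^2).re := by
    simp [Complex.mul_re]
  rw [this, sq_re]
  simp [Complex.sub_re, Complex.sub_im]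

lemma norm_g4_unif {R : ℝ} {z : ℂ} (hz : ‖z‖ ≤ R) {u : ℝ} (hu : u ≤ 0) :
    ‖Complex.exp (-4*(z-(u:ℂ))^2)‖ ≤ Real.exp (4*R^2) * Real.exp (-2*u^2 - 8*R*u) := by
  rw [norm_g4, ← Real.exp_add]
  apply Real.exp_le_exp.mpr
  have h1 : |z.re| ≤ R := (Complex.abs_re_le_norm z).trans hz
  have h3 : z.im^2 ≤ R^2 := by nlinarith [sq_abs z.im, abs_nonneg z.im, (Complex.abs_im_le_norm z).trans hz]
  have h4 : -R ≤ z.re := by cases abs_le.mp h1; linarith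
  nlinarith [mul_nonneg (neg_nonneg.mpr hu) (by linarith : (0:ℝ) ≤ z.re + R), sq_nonneg z.re,
    sq_nonneg u, mul_nonneg (mul_nonneg (neg_nonneg.mpr hu) (neg_nonneg.mpr hu)) (le_trans (abs_nonneg z.re) h1)]

lemma gauss_Iio_zero : ∫ u in Iio (0:ℝ), Complex.exp (-4*(u:ℂ)^2)
    = ((Real.sqrt Real.pi / 4 : ℝ) : ℂ) := by
  have hcoe : ∀ u : ℝ, Complex.exp (-4*(u:ℂ)^2) = ((Real.exp (-4*u^2) : ℝ) : ℂ) := by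
    intro u
    rw [Complex.ofReal_exp]
    congr 1
    push_cast
    ring
  simp_rw [hcoe]
  have hIR : ∫ u in Iio (0:ℝ), ((Real.exp (-4*u^2) : ℝ) : ℂ)
      = ((∫ u in Iio (0:ℝ), Real.exp (-4*u^2) : ℝ) : ℂ) := integral_ofReal
  rw [hIR, Complex.ofReal_inj]
  have hint : Integrable (fun u : ℝ => Real.exp (-4*u^2)) := integrable_exp_neg_mul_sq (by norm_num)
  have htot : ∫ u : ℝ, Real.exp (-4*u^2) = Real.sqrt (Real.pi / 4) := integral_gaussian 4
  have hsym : ∫ u in Ioi (0:ℝ), Real.exp (-4*u^2) = ∫ u in Iic (0:ℝ), Real.exp (-4*u^2) := by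
    have h := integral_comp_neg_Ioi (0:ℝ) (fun u => Real.exp (-4*u^2))
    simp only [neg_zero] at h
    rw [← h]
    congr 1
    ext u
    ring_nf
  have hsplit : (∫ u in Iic (0:ℝ), Real.exp (-4*u^2)) + ∫ u in Ioi (0:ℝ), Real.exp (-4*u^2)
      = Real.sqrt (Real.pi / 4) := by
    rw [← htot]
    exact intervalIntegral.integral_Iic_add_Ioi hint.integrableOn hint.integrableOn
  have h4 : Real.sqrt (Real.pi / 4) = Real.sqrt Real.pi / 2 := by
    rw [show (Real.pi / 4) = Real.pi * (1/4) by ring, Real.sqrt_mul Real.pi_pos.le,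
      show Real.sqrt (1/4) = 1/2 by rw [show (1/4:ℝ) = (1/2)^2 by norm_num, Real.sqrt_sq (by norm_num)]]
    ring
  rw [← integral_Iic_eq_integral_Iio]
  rw [← hsym] at hsplit
  rw [h4] at hsplit
  linarith

lemma cerfc_continuous : Continuous cerfc :=
  continuous_iff_continuousAt.mpr fun z => (hasDerivAt_cerfc z).differentiableAt.continuousAt

lemma sqrt2_sq : ((Real.sqrt 2 : ℝ):ℂ)^2 = 2 := by
  rw [← Complex.ofReal_pow, Real.sq_sqrt (by norm_num : (0:ℝ) ≤ 2)]
  norm_num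

/-- constant for cerfc bound -/
noncomputable def Kc2 (w : ℂ) : ℝ :=
  1 + (2 / Real.sqrt Real.pi) * (Real.sqrt 2 * (‖w‖ + 1)) * Real.exp (2 * w.im ^ 2)

lemma Kc2_ge_one (w : ℂ) : 1 ≤ Kc2 w := by
  have h : 0 ≤ (2 / Real.sqrt Real.pi) * (Real.sqrt 2 * (‖w‖ + 1)) * Real.exp (2 * w.im ^ 2) := by
    positivity
  simp only [Kc2]; linarith

lemma c2_norm_le (w : ℂ) (u : ℝ) :
    ‖cerfc ((Real.sqrt 2 : ℂ) * (w - (u:ℂ)))‖ ≤ Kc2 w * (1 + |u|) := by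
  set a : ℂ := (Real.sqrt 2 : ℂ) * (w - (u:ℂ)) with ha
  have h1 := cerfc_norm_le a
  have hna : ‖a‖ ≤ Real.sqrt 2 * (‖w‖ + |u|) := by
    rw [ha, norm_mul, Complex.norm_real, Real.norm_eq_abs,
      abs_of_nonneg (Real.sqrt_nonneg 2)]
    have : ‖w - (u:ℂ)‖ ≤ ‖w‖ + |u| := by
      refine (norm_sub_le _ _).trans ?_
      simp
    exact mul_le_mul_of_nonneg_left this (Real.sqrt_nonneg 2)
  have hre : max 0 (-(a^2).re) ≤ 2 * w.im^2 := by
    have ha2 : a^2 = ((Real.sqrt 2:ℝ):ℂ)^2 * (w - (u:ℂ))^2 := by rw [ha]; ring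
    rw [sqrt2_sq] at ha2
    have h2 : (a^2).re = 2 * ((w.re - u)^2 - w.im^2) := by
      rw [ha2]
      have : ((2:ℂ) * (w - (u:ℂ))^2).re = 2 * ((w - (u:ℂ))^2).re := by
        simp [Complex.mul_re]
      rw [this, sq_re]
      simp [Complex.sub_re, Complex.sub_im]
    rw [h2]
    apply max_le (by positivity)
    nlinarith [sq_nonneg (w.re - u)]
  have hKc : Kc2 w * (1 + |u|)
      = 1 + |u| + (2 / Real.sqrt Real.pi) * (Real.sqrt 2 * (‖w‖ + 1)) * Real.exp (2 * w.im ^ 2) * (1 + |u|) := by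
    simp only [Kc2]; ring
  refine h1.trans ?_
  rw [hKc]
  have hexp : Real.exp (max 0 (-(a^2).re)) ≤ Real.exp (2 * w.im^2) := Real.exp_le_exp.mpr hre
  have hπ : (0:ℝ) < 2 / Real.sqrt Real.pi := by
    positivity
  have key : ‖a‖ * Real.exp (max 0 (-(a^2).re))
      ≤ (Real.sqrt 2 * (‖w‖ + |u|)) * Real.exp (2 * w.im^2) := by
    exact mul_le_mul hna hexp (Real.exp_nonneg _) (by positivity)
  have h3 := mul_le_mul_of_nonneg_left key hπ.le
  have hfin : (2 / Real.sqrt Real.pi) * ((Real.sqrt 2 * (‖w‖ + |u|)) * Real.exp (2 * w.im^2))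
      ≤ (2 / Real.sqrt Real.pi) * (Real.sqrt 2 * (‖w‖ + 1)) * Real.exp (2 * w.im ^ 2) * (1 + |u|) := by
    have hE : (0:ℝ) ≤ Real.exp (2 * w.im^2) := Real.exp_nonneg _
    have hs2 : (0:ℝ) ≤ Real.sqrt 2 := Real.sqrt_nonneg 2
    have habs : (0:ℝ) ≤ |u| := abs_nonneg u
    have hw : (0:ℝ) ≤ ‖w‖ := norm_nonneg w
    have : ‖w‖ + |u| ≤ (‖w‖ + 1) * (1 + |u|) := by nlinarith
    nlinarith [mul_nonneg (mul_nonneg hπ.le hs2) hE]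
  have habs : (0:ℝ) ≤ |u| := abs_nonneg u
  linarith [h3.trans hfin]

lemma norm_ball_le {m x : ℂ} (hx : x ∈ ball m 1) : ‖x‖ ≤ ‖m‖ + 1 := by
  have hb := mem_ball_iff_norm.mp hx
  have h0 : x = m + (x - m) := by ring
  rw [h0]
  exact (norm_add_le _ _).trans (by linarith)

lemma cont_g4 (m : ℂ) : Continuous (fun u : ℝ => Complex.exp (-4*((u:ℂ)-m)^2)) := by
  continuity

lemma hasDerivAt_g4 (u : ℝ) (x : ℂ) :
    HasDerivAt (fun x : ℂ => Complex.exp (-4*((u:ℂ)-x)^2))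
      (8*((u:ℂ)-x) * Complex.exp (-4*((u:ℂ)-x)^2)) x := by
  have h1 : HasDerivAt (fun x : ℂ => -4*((u:ℂ)-x)^2) (8*((u:ℂ)-x)) x := by
    have h0 : HasDerivAt (fun x : ℂ => (u:ℂ) - x) (-1) x := (hasDerivAt_id x).const_sub (u:ℂ)
    have := (h0.pow 2).const_mul (-4 : ℂ)
    refine this.congr_deriv (Eq.symm ?_)
    ring
  have := h1.cexp
  refine this.congr_deriv (Eq.symm ?_)
  ring

lemma hasDerivAt_gaussInt (m : ℂ) :
    HasDerivAt (fun m : ℂ => ∫ u in Iio (0:ℝ), Complex.exp (-4*((u:ℂ)-m)^2))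
      (-Complex.exp (-4*m^2)) m := by
  set R : ℝ := ‖m‖ + 1 with hR
  have hR1 : 1 ≤ R := by have := norm_nonneg m; simp only [hR]; linarith
  have hmR : ‖m‖ ≤ R := by simp only [hR]; linarith
  have hflip : ∀ (x : ℂ) (u : ℝ), Complex.exp (-4*((u:ℂ)-x)^2) = Complex.exp (-4*(x-(u:ℂ))^2) := by
    intro x u; congr 1; ring
  have key := hasDerivAt_integral_of_dominated_loc_of_deriv_le
    (μ := volume.restrict (Iio (0:ℝ)))
    (F := fun (x : ℂ) (u : ℝ) => Complex.exp (-4*((u:ℂ)-x)^2))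
    (F' := fun (x : ℂ) (u : ℝ) => 8*((u:ℂ)-x) * Complex.exp (-4*((u:ℂ)-x)^2))
    (x₀ := m) (s := ball m 1)
    (bound := fun u => (8*R*Real.exp (4*R^2)) * ((1+|u|)^2 * Real.exp (-2*u^2 - 8*R*u)))
    (ball_mem_nhds m one_pos) ?_ ?_ ?_ ?_ ?_ ?_
  · obtain ⟨hint, h⟩ := key
    have heq : (∫ u in Iio (0:ℝ), 8*((u:ℂ)-m) * Complex.exp (-4*((u:ℂ)-m)^2))
        = -Complex.exp (-4*m^2) := by
      rw [← integral_Iic_eq_integral_Iio]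
      have hFTC := integral_Iic_of_hasDerivAt_of_tendsto'
        (f := fun u : ℝ => -Complex.exp (-4*((u:ℂ)-m)^2))
        (f' := fun u : ℝ => 8*((u:ℂ)-m) * Complex.exp (-4*((u:ℂ)-m)^2))
        (a := (0:ℝ)) (m := 0) ?_ ?_ ?_
      · rw [hFTC]
        simp
      · intro u _
        have hc : HasDerivAt (fun s : ℂ => -Complex.exp (-4*((s:ℂ)-m)^2))
            (8*((u:ℂ)-m) * Complex.exp (-4*((u:ℂ)-m)^2)) (u:ℂ) := by
          have h1 : HasDerivAt (fun s : ℂ => -4*(s-m)^2) (-8*((u:ℂ)-m)) (u:ℂ) := by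
            have h0 : HasDerivAt (fun s : ℂ => s - m) 1 (u:ℂ) := (hasDerivAt_id _).sub_const m
            have := (h0.pow 2).const_mul (-4 : ℂ)
            refine this.congr_deriv (Eq.symm ?_)
            ring
          have := h1.cexp.neg
          refine this.congr_deriv (Eq.symm ?_)
          ring
        exact hc.comp_ofReal
      · -- integrability of f' on Iic 0
        show Integrable _ (volume.restrict (Iic (0:ℝ)))
        apply Integrable.mono' ((integrable_bound (8*R) (8*R*Real.exp (4*R^2))).restrict)
        · apply Continuous.aestronglyMeasurable
          apply Continuous.mul (by continuity) (cont_g4 m)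
        · rw [ae_restrict_iff' measurableSet_Iic]
          filter_upwards with u hu
          have hu0 : u ≤ 0 := hu
          rw [norm_mul]
          have hnu : ‖(u:ℂ) - m‖ ≤ |u| + R := by
            refine (norm_sub_le _ _).trans ?_
            simp only [Complex.norm_real, Real.norm_eq_abs]
            linarith
          have hg : ‖Complex.exp (-4*((u:ℂ)-m)^2)‖ ≤ Real.exp (4*R^2) * Real.exp (-2*u^2 - 8*R*u) := by
            rw [hflip]
            exact norm_g4_unif hmR hu0
          have h8 : ‖(8:ℂ)*((u:ℂ)-m)‖ ≤ 8*(|u| + R) := by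
            rw [norm_mul, Complex.norm_ofNat]
            exact mul_le_mul_of_nonneg_left hnu (by norm_num)
          calc ‖(8:ℂ)*((u:ℂ)-m)‖ * ‖Complex.exp (-4*((u:ℂ)-m)^2)‖
              ≤ (8*(|u| + R)) * (Real.exp (4*R^2) * Real.exp (-2*u^2 - 8*R*u)) :=
                mul_le_mul h8 hg (norm_nonneg _) (by positivity)
            _ ≤ 8*R*Real.exp (4*R^2) * ((1+|u|)^2 * Real.exp (-2*u^2 - 8*R*u)) := by
                have habs : (0:ℝ) ≤ |u| := abs_nonneg u
                have hE : (0:ℝ) < Real.exp (4*R^2) := Real.exp_pos _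
                have hE2 : (0:ℝ) < Real.exp (-2*u^2 - 8*R*u) := Real.exp_pos _
                have hru : |u| ≤ R * |u| := le_mul_of_one_le_left habs hR1
                have hpoly : |u| + R ≤ R * (1+|u|)^2 := by
                  nlinarith [mul_nonneg (by linarith : (0:ℝ) ≤ R) (sq_nonneg u), sq_abs u]
                nlinarith [mul_le_mul_of_nonneg_right hpoly (mul_nonneg hE.le hE2.le)]
      · -- tendsto at atBot
        have hb : Tendsto (fun u : ℝ => Complex.exp (-4*((u:ℂ)-m)^2)) atBot (𝓝 0) := by
          apply squeeze_zero_norm' ?_ (tendsto_bound_atBot (8*R) (Real.exp (4*R^2)))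
          filter_upwards [eventually_le_atBot (0:ℝ)] with u hu0
          have hg : ‖Complex.exp (-4*((u:ℂ)-m)^2)‖
              ≤ Real.exp (4*R^2) * Real.exp (-2*u^2 - 8*R*u) := by
            rw [hflip]; exact norm_g4_unif hmR hu0
          refine hg.trans ?_
          have h1 : (1:ℝ) ≤ (1+|u|)^2 := by nlinarith [abs_nonneg u]
          nlinarith [Real.exp_pos (4*R^2), Real.exp_pos (-2*u^2 - 8*R*u),
            mul_le_mul_of_nonneg_right h1 (mul_nonneg (Real.exp_nonneg (4*R^2)) (Real.exp_nonneg (-2*u^2 - 8*R*u)))]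
        simpa using hb.neg
    rw [heq] at h
    exact h
  · filter_upwards with x
    exact (cont_g4 x).aestronglyMeasurable.restrict
  · apply Integrable.mono' ((integrable_bound (8*R) (Real.exp (4*R^2))).restrict)
    · exact (cont_g4 m).aestronglyMeasurable.restrict
    · rw [ae_restrict_iff' measurableSet_Iio]
      filter_upwards with u hu
      have hu0 : u ≤ 0 := le_of_lt hu
      have hg : ‖Complex.exp (-4*((u:ℂ)-m)^2)‖ ≤ Real.exp (4*R^2) * Real.exp (-2*u^2 - 8*R*u) := by
        rw [hflip]
        exact norm_g4_unif hmR hu0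
      refine hg.trans ?_
      have h1 : (1:ℝ) ≤ (1+|u|)^2 := by nlinarith [abs_nonneg u]
      nlinarith [Real.exp_pos (4*R^2), Real.exp_pos (-2*u^2 - 8*R*u),
        mul_le_mul_of_nonneg_right h1 (mul_nonneg (Real.exp_nonneg (4*R^2)) (Real.exp_nonneg (-2*u^2 - 8*R*u)))]
  · apply Continuous.aestronglyMeasurable
    exact Continuous.mul (by continuity) (cont_g4 m)
  · rw [ae_restrict_iff' measurableSet_Iio]
    filter_upwards with u hu x hx
    have hu0 : u ≤ 0 := le_of_lt hu
    have hxR : ‖x‖ ≤ R := norm_ball_le hx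
    rw [norm_mul]
    have hnu : ‖(u:ℂ) - x‖ ≤ |u| + R := by
      refine (norm_sub_le _ _).trans ?_
      simp only [Complex.norm_real, Real.norm_eq_abs]
      linarith
    have hg : ‖Complex.exp (-4*((u:ℂ)-x)^2)‖ ≤ Real.exp (4*R^2) * Real.exp (-2*u^2 - 8*R*u) := by
      rw [hflip]
      exact norm_g4_unif hxR hu0
    have h8 : ‖(8:ℂ)*((u:ℂ)-x)‖ ≤ 8*(|u| + R) := by
      rw [norm_mul, Complex.norm_ofNat]
      exact mul_le_mul_of_nonneg_left hnu (by norm_num)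
    calc ‖(8:ℂ)*((u:ℂ)-x)‖ * ‖Complex.exp (-4*((u:ℂ)-x)^2)‖
        ≤ (8*(|u| + R)) * (Real.exp (4*R^2) * Real.exp (-2*u^2 - 8*R*u)) :=
          mul_le_mul h8 hg (norm_nonneg _) (by positivity)
      _ ≤ 8*R*Real.exp (4*R^2) * ((1+|u|)^2 * Real.exp (-2*u^2 - 8*R*u)) := by
          have habs : (0:ℝ) ≤ |u| := abs_nonneg u
          have hE : (0:ℝ) < Real.exp (4*R^2) := Real.exp_pos _
          have hE2 : (0:ℝ) < Real.exp (-2*u^2 - 8*R*u) := Real.exp_pos _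
          have hru : |u| ≤ R * |u| := le_mul_of_one_le_left habs hR1
          have hpoly : |u| + R ≤ R * (1+|u|)^2 := by
            nlinarith [mul_nonneg (by linarith : (0:ℝ) ≤ R) (sq_nonneg u), sq_abs u]
          nlinarith [mul_le_mul_of_nonneg_right hpoly (mul_nonneg hE.le hE2.le)]
  · exact (integrable_bound (8*R) (8*R*Real.exp (4*R^2))).restrict
  · filter_upwards with u x hx
    exact hasDerivAt_g4 u x

lemma gauss_Iio (m : ℂ) :
    ∫ u in Iio (0:ℝ), Complex.exp (-4*((u:ℂ)-m)^2)
      = ((Real.sqrt Real.pi / 4 : ℝ) : ℂ) * cerfc (2*m) := by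
  have hπ : (0:ℝ) < Real.sqrt Real.pi := Real.sqrt_pos.mpr Real.pi_pos
  have hπ' : ((Real.sqrt Real.pi : ℝ):ℂ) ≠ 0 := by
    exact_mod_cast hπ.ne'
  set G : ℂ → ℂ := fun m => (∫ u in Iio (0:ℝ), Complex.exp (-4*((u:ℂ)-m)^2))
      - ((Real.sqrt Real.pi / 4 : ℝ) : ℂ) * cerfc (2*m) with hG
  have hGd : ∀ x : ℂ, HasDerivAt G 0 x := by
    intro x
    have h1 := hasDerivAt_gaussInt x
    have h2 : HasDerivAt (fun m : ℂ => cerfc (2*m))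
        (-(2 / (Real.sqrt Real.pi : ℂ)) * Complex.exp (-(2*x)^2) * 2) x := by
      have hc := hasDerivAt_cerfc (2*x)
      have hi : HasDerivAt (fun m : ℂ => 2*m) 2 x := by
        simpa using (hasDerivAt_id x).const_mul (2:ℂ)
      exact hc.comp x hi
    have h3 := h1.sub (h2.const_mul (((Real.sqrt Real.pi / 4 : ℝ) : ℂ)))
    refine h3.congr_deriv (Eq.symm ?_)
    have he : Complex.exp (-(2*x)^2) = Complex.exp (-4*x^2) := by congr 1; ring
    rw [he]
    push_cast
    field_simp
    ring
  have hconst : G m = G 0 := by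
    apply is_const_of_deriv_eq_zero (fun x => (hGd x).differentiableAt)
    intro x
    exact (hGd x).deriv
  have hG0 : G 0 = 0 := by
    rw [hG]
    simp only
    have : (∫ u in Iio (0:ℝ), Complex.exp (-4*((u:ℂ)-(0:ℂ))^2))
        = ∫ u in Iio (0:ℝ), Complex.exp (-4*(u:ℂ)^2) := by
      congr 1; ext u; congr 1; ring
    rw [this, gauss_Iio_zero]
    rw [show (2:ℂ)*(0:ℂ) = 0 by ring, cerfc_zero]
    ring
  have := hconst.trans hG0
  rw [hG] at this
  simp only at this
  linear_combination this

lemma sqrt2_pos : (0:ℝ) < Real.sqrt 2 := Real.sqrt_pos.mpr two_pos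

lemma hasDerivAt_cexp_neg2sq (c x : ℂ) :
    HasDerivAt (fun x : ℂ => Complex.exp (-2*(x - c)^2))
      (-4*(x-c) * Complex.exp (-2*(x-c)^2)) x := by
  have h1 : HasDerivAt (fun x : ℂ => -2*(x-c)^2) (-4*(x-c)) x := by
    have := (((hasDerivAt_id x).sub_const c).pow 2).const_mul (-2:ℂ)
    refine this.congr_deriv (Eq.symm ?_)
    simp only [id_eq]
    ring
  have := h1.cexp
  refine this.congr_deriv (Eq.symm ?_)
  ring

lemma hasDerivAt_cexp_neg2sq' (c s : ℂ) :
    HasDerivAt (fun s : ℂ => Complex.exp (-2*(c - s)^2))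
      (4*(c-s) * Complex.exp (-2*(c-s)^2)) s := by
  have h1 : HasDerivAt (fun s : ℂ => -2*(c-s)^2) (4*(c-s)) s := by
    have := (((hasDerivAt_id s).const_sub c).pow 2).const_mul (-2:ℂ)
    refine this.congr_deriv (Eq.symm ?_)
    simp only [id_eq]
    ring
  have := h1.cexp
  refine this.congr_deriv (Eq.symm ?_)
  ring

lemma sq2_mul_sq (a : ℂ) : -((Real.sqrt 2 : ℂ)*a)^2 = -2*a^2 := by
  rw [mul_pow, sqrt2_sq]
  ring

lemma hasDerivAt_cerfc_shift (c x : ℂ) :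
    HasDerivAt (fun x : ℂ => cerfc ((Real.sqrt 2:ℂ)*(x - c)))
      (-(2*(Real.sqrt 2:ℂ)/(Real.sqrt Real.pi:ℂ)) * Complex.exp (-2*(x-c)^2)) x := by
  have hc := hasDerivAt_cerfc ((Real.sqrt 2:ℂ)*(x - c))
  have hi : HasDerivAt (fun x : ℂ => (Real.sqrt 2:ℂ)*(x - c)) ((Real.sqrt 2:ℂ)) x := by
    simpa using ((hasDerivAt_id x).sub_const c).const_mul ((Real.sqrt 2:ℂ))
  have := hc.comp x hi
  refine this.congr_deriv (Eq.symm ?_)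
  rw [sq2_mul_sq]
  ring

lemma hasDerivAt_cerfc_shift' (c s : ℂ) :
    HasDerivAt (fun s : ℂ => cerfc ((Real.sqrt 2:ℂ)*(c - s)))
      ((2*(Real.sqrt 2:ℂ)/(Real.sqrt Real.pi:ℂ)) * Complex.exp (-2*(c-s)^2)) s := by
  have hc := hasDerivAt_cerfc ((Real.sqrt 2:ℂ)*(c - s))
  have hi : HasDerivAt (fun s : ℂ => (Real.sqrt 2:ℂ)*(c - s)) (-(Real.sqrt 2:ℂ)) s := by
    simpa using ((hasDerivAt_id s).const_sub c).const_mul ((Real.sqrt 2:ℂ))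
  have := hc.comp s hi
  refine this.congr_deriv (Eq.symm ?_)
  rw [sq2_mul_sq]
  ring

lemma cont_g2 (c : ℂ) : Continuous (fun u : ℝ => Complex.exp (-2*(c-(u:ℂ))^2)) := by
  continuity

lemma cont_c2 (c : ℂ) : Continuous (fun u : ℝ => cerfc ((Real.sqrt 2:ℂ)*(c-(u:ℂ)))) := by
  apply cerfc_continuous.comp
  continuity

lemma keyH (z w : ℂ) :
    Integrable (fun u : ℝ =>
        -4*(z-(u:ℂ)) * Complex.exp (-2*(z-(u:ℂ))^2) * cerfc ((Real.sqrt 2:ℂ)*(w-(u:ℂ)))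
        + (2*(Real.sqrt 2:ℂ)/(Real.sqrt Real.pi:ℂ)) * Complex.exp (-2*(z-(u:ℂ))^2)
            * Complex.exp (-2*(w-(u:ℂ))^2)) (volume.restrict (Iio (0:ℝ)))
    ∧ HasDerivAt (fun x : ℂ => ∫ u in Iio (0:ℝ),
        (Complex.exp (-2*(x-(u:ℂ))^2) * cerfc ((Real.sqrt 2:ℂ)*(w-(u:ℂ)))
          - Complex.exp (-2*(w-(u:ℂ))^2) * cerfc ((Real.sqrt 2:ℂ)*(x-(u:ℂ)))))
      (∫ u in Iio (0:ℝ),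
        (-4*(z-(u:ℂ)) * Complex.exp (-2*(z-(u:ℂ))^2) * cerfc ((Real.sqrt 2:ℂ)*(w-(u:ℂ)))
        + (2*(Real.sqrt 2:ℂ)/(Real.sqrt Real.pi:ℂ)) * Complex.exp (-2*(z-(u:ℂ))^2)
            * Complex.exp (-2*(w-(u:ℂ))^2))) z := by
  have hπ : (0:ℝ) < Real.sqrt Real.pi := Real.sqrt_pos.mpr Real.pi_pos
  set R : ℝ := ‖z‖ + 1 with hRdef
  have hR1 : 1 ≤ R := by have := norm_nonneg z; simp only [hRdef]; linarith
  have hzR : ‖z‖ ≤ R := by simp only [hRdef]; linarith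
  set C2 : ℝ := 2*Real.sqrt 2/Real.sqrt Real.pi * Real.exp (2*w.im^2) with hC2def
  have hC2pos : 0 < C2 := by rw [hC2def]; positivity
  have hKw := Kc2_ge_one w
  have hnormC2 : ‖(2*(Real.sqrt 2:ℂ)/(Real.sqrt Real.pi:ℂ))‖ * Real.exp (2*w.im^2) = C2 := by
    rw [norm_div, norm_mul, Complex.norm_ofNat, Complex.norm_real, Complex.norm_real,
      Real.norm_eq_abs, Real.norm_eq_abs, abs_of_pos sqrt2_pos, abs_of_pos hπ, hC2def]
  exact hasDerivAt_integral_of_dominated_loc_of_deriv_le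
    (μ := volume.restrict (Iio (0:ℝ)))
    (F := fun (x : ℂ) (u : ℝ) =>
        Complex.exp (-2*(x-(u:ℂ))^2) * cerfc ((Real.sqrt 2:ℂ)*(w-(u:ℂ)))
          - Complex.exp (-2*(w-(u:ℂ))^2) * cerfc ((Real.sqrt 2:ℂ)*(x-(u:ℂ))))
    (F' := fun (x : ℂ) (u : ℝ) =>
        -4*(x-(u:ℂ)) * Complex.exp (-2*(x-(u:ℂ))^2) * cerfc ((Real.sqrt 2:ℂ)*(w-(u:ℂ)))
        + (2*(Real.sqrt 2:ℂ)/(Real.sqrt Real.pi:ℂ)) * Complex.exp (-2*(x-(u:ℂ))^2)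
            * Complex.exp (-2*(w-(u:ℂ))^2))
    (x₀ := z) (s := ball z 1)
    (bound := fun u => ((4*R*Kc2 w + C2) * Real.exp (2*R^2))
        * ((1+|u|)^2 * Real.exp (-2*u^2 - 4*R*u)))
    (ball_mem_nhds z one_pos)
    (by
      filter_upwards with x
      exact (((cont_g2 x).mul (cont_c2 w)).sub
        ((cont_g2 w).mul (cont_c2 x))).aestronglyMeasurable.restrict)
    (by
      apply Integrable.mono'
        (((integrable_bound (4*R) (Real.exp (2*R^2) * Kc2 w)).add
          (integrable_bound (4*‖w‖) (Real.exp (2*‖w‖^2) * Kc2 z))).restrict)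
      · exact (((cont_g2 z).mul (cont_c2 w)).sub
          ((cont_g2 w).mul (cont_c2 z))).aestronglyMeasurable.restrict
      · rw [ae_restrict_iff' measurableSet_Iio]
        filter_upwards with u hu
        have hu0 : u ≤ 0 := le_of_lt hu
        have h1 : ‖Complex.exp (-2*(z-(u:ℂ))^2) * cerfc ((Real.sqrt 2:ℂ)*(w-(u:ℂ)))‖
            ≤ Real.exp (2*R^2) * Kc2 w * ((1+|u|)^2 * Real.exp (-2*u^2 - 4*R*u)) := by
          rw [norm_mul]
          calc ‖Complex.exp (-2*(z-(u:ℂ))^2)‖ * ‖cerfc ((Real.sqrt 2:ℂ)*(w-(u:ℂ)))‖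
              ≤ (Real.exp (2*R^2) * Real.exp (-2*u^2 - 4*R*u)) * (Kc2 w * (1+|u|)) :=
                mul_le_mul (norm_g_unif hzR hu0) (c2_norm_le w u) (norm_nonneg _) (by positivity)
            _ ≤ Real.exp (2*R^2) * Kc2 w * ((1+|u|)^2 * Real.exp (-2*u^2 - 4*R*u)) := by
                have habs : (0:ℝ) ≤ |u| := abs_nonneg u
                nlinarith [Real.exp_pos (2*R^2), Real.exp_pos (-2*u^2 - 4*R*u),
                  mul_nonneg (mul_nonneg (Real.exp_nonneg (2*R^2)) (Real.exp_nonneg (-2*u^2-4*R*u))) (by linarith : (0:ℝ) ≤ Kc2 w),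
                  mul_nonneg habs habs]
        have h2 : ‖Complex.exp (-2*(w-(u:ℂ))^2) * cerfc ((Real.sqrt 2:ℂ)*(z-(u:ℂ)))‖
            ≤ Real.exp (2*‖w‖^2) * Kc2 z * ((1+|u|)^2 * Real.exp (-2*u^2 - 4*‖w‖*u)) := by
          rw [norm_mul]
          calc ‖Complex.exp (-2*(w-(u:ℂ))^2)‖ * ‖cerfc ((Real.sqrt 2:ℂ)*(z-(u:ℂ)))‖
              ≤ (Real.exp (2*‖w‖^2) * Real.exp (-2*u^2 - 4*‖w‖*u)) * (Kc2 z * (1+|u|)) :=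
                mul_le_mul (norm_g_unif le_rfl hu0) (c2_norm_le z u) (norm_nonneg _) (by positivity)
            _ ≤ Real.exp (2*‖w‖^2) * Kc2 z * ((1+|u|)^2 * Real.exp (-2*u^2 - 4*‖w‖*u)) := by
                have habs : (0:ℝ) ≤ |u| := abs_nonneg u
                nlinarith [Real.exp_pos (2*‖w‖^2), Real.exp_pos (-2*u^2 - 4*‖w‖*u),
                  mul_nonneg (mul_nonneg (Real.exp_nonneg (2*‖w‖^2)) (Real.exp_nonneg (-2*u^2-4*‖w‖*u))) (by linarith [Kc2_ge_one z] : (0:ℝ) ≤ Kc2 z),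
                  mul_nonneg habs habs]
        calc ‖Complex.exp (-2*(z-(u:ℂ))^2) * cerfc ((Real.sqrt 2:ℂ)*(w-(u:ℂ)))
              - Complex.exp (-2*(w-(u:ℂ))^2) * cerfc ((Real.sqrt 2:ℂ)*(z-(u:ℂ)))‖
            ≤ ‖Complex.exp (-2*(z-(u:ℂ))^2) * cerfc ((Real.sqrt 2:ℂ)*(w-(u:ℂ)))‖
              + ‖Complex.exp (-2*(w-(u:ℂ))^2) * cerfc ((Real.sqrt 2:ℂ)*(z-(u:ℂ)))‖ := norm_sub_le _ _
          _ ≤ Real.exp (2*R^2) * Kc2 w * ((1+|u|)^2 * Real.exp (-2*u^2 - 4*R*u))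
              + Real.exp (2*‖w‖^2) * Kc2 z * ((1+|u|)^2 * Real.exp (-2*u^2 - 4*‖w‖*u)) :=
              add_le_add h1 h2)
    (by
      apply Continuous.aestronglyMeasurable
      apply Continuous.add
      · exact ((Continuous.mul (by continuity) (cont_g2 z)).mul (cont_c2 w))
      · exact (continuous_const.mul (cont_g2 z)).mul (cont_g2 w))
    (by
      rw [ae_restrict_iff' measurableSet_Iio]
      filter_upwards with u hu x hx
      have hu0 : u ≤ 0 := le_of_lt hu
      have hxR : ‖x‖ ≤ R := by
        have := norm_ball_le hx
        simpa [hRdef] using this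
      have habs : (0:ℝ) ≤ |u| := abs_nonneg u
      have hE1 : (0:ℝ) < Real.exp (2*R^2) * Real.exp (-2*u^2 - 4*R*u) := by positivity
      have hn4 : ‖(-4 : ℂ)*(x-(u:ℂ))‖ ≤ 4*(R+|u|) := by
        rw [norm_mul]
        have : ‖x - (u:ℂ)‖ ≤ R + |u| := by
          refine (norm_sub_le _ _).trans ?_
          simp only [Complex.norm_real, Real.norm_eq_abs]
          linarith
        calc ‖(-4:ℂ)‖ * ‖x - (u:ℂ)‖ = 4 * ‖x - (u:ℂ)‖ := by norm_num
          _ ≤ 4*(R+|u|) := by linarith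
      have h1 : ‖-4*(x-(u:ℂ)) * Complex.exp (-2*(x-(u:ℂ))^2) * cerfc ((Real.sqrt 2:ℂ)*(w-(u:ℂ)))‖
          ≤ (4*(R+|u|)) * (Real.exp (2*R^2) * Real.exp (-2*u^2 - 4*R*u)) * (Kc2 w * (1+|u|)) := by
        rw [norm_mul, norm_mul]
        exact mul_le_mul (mul_le_mul hn4 (norm_g_unif hxR hu0) (norm_nonneg _) (by positivity))
          (c2_norm_le w u) (norm_nonneg _) (by positivity)
      have h2 : ‖(2*(Real.sqrt 2:ℂ)/(Real.sqrt Real.pi:ℂ)) * Complex.exp (-2*(x-(u:ℂ))^2)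
            * Complex.exp (-2*(w-(u:ℂ))^2)‖
          ≤ C2 * (Real.exp (2*R^2) * Real.exp (-2*u^2 - 4*R*u)) := by
        rw [norm_mul, norm_mul]
        calc ‖(2*(Real.sqrt 2:ℂ)/(Real.sqrt Real.pi:ℂ))‖ * ‖Complex.exp (-2*(x-(u:ℂ))^2)‖
              * ‖Complex.exp (-2*(w-(u:ℂ))^2)‖
            ≤ ‖(2*(Real.sqrt 2:ℂ)/(Real.sqrt Real.pi:ℂ))‖
              * (Real.exp (2*R^2) * Real.exp (-2*u^2 - 4*R*u)) * Real.exp (2*w.im^2) := by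
              apply mul_le_mul _ (norm_g_le_const w u) (norm_nonneg _) (by positivity)
              exact mul_le_mul_of_nonneg_left (norm_g_unif hxR hu0) (norm_nonneg _)
          _ = C2 * (Real.exp (2*R^2) * Real.exp (-2*u^2 - 4*R*u)) := by
              rw [← hnormC2]; ring
      have haux : 4*(R+|u|)*(Kc2 w*(1+|u|)) + C2 ≤ (4*R*Kc2 w + C2)*(1+|u|)^2 := by
        have hKge : (0:ℝ) ≤ Kc2 w := by linarith
        nlinarith [mul_nonneg habs habs, mul_nonneg (mul_nonneg hKge habs) habs,
          mul_le_mul_of_nonneg_right hR1 habs,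
          mul_nonneg (mul_nonneg hKge (by linarith : (0:ℝ) ≤ R - 1)) habs]
      calc ‖-4*(x-(u:ℂ)) * Complex.exp (-2*(x-(u:ℂ))^2) * cerfc ((Real.sqrt 2:ℂ)*(w-(u:ℂ)))
            + (2*(Real.sqrt 2:ℂ)/(Real.sqrt Real.pi:ℂ)) * Complex.exp (-2*(x-(u:ℂ))^2)
              * Complex.exp (-2*(w-(u:ℂ))^2)‖
          ≤ (4*(R+|u|)) * (Real.exp (2*R^2) * Real.exp (-2*u^2 - 4*R*u)) * (Kc2 w * (1+|u|))
            + C2 * (Real.exp (2*R^2) * Real.exp (-2*u^2 - 4*R*u)) :=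
            (norm_add_le _ _).trans (add_le_add h1 h2)
        _ = (4*(R+|u|)*(Kc2 w*(1+|u|)) + C2) * (Real.exp (2*R^2) * Real.exp (-2*u^2 - 4*R*u)) := by
            ring
        _ ≤ ((4*R*Kc2 w + C2)*(1+|u|)^2) * (Real.exp (2*R^2) * Real.exp (-2*u^2 - 4*R*u)) :=
            mul_le_mul_of_nonneg_right haux hE1.le
        _ = ((4*R*Kc2 w + C2) * Real.exp (2*R^2)) * ((1+|u|)^2 * Real.exp (-2*u^2 - 4*R*u)) := by
            ring)
    ((integrable_bound (4*R) ((4*R*Kc2 w + C2) * Real.exp (2*R^2))).restrict)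
    (by
      filter_upwards with u x hx
      have hd1 := (hasDerivAt_cexp_neg2sq (u:ℂ) x).mul_const (cerfc ((Real.sqrt 2:ℂ)*(w-(u:ℂ))))
      have hd2 := (hasDerivAt_cerfc_shift (u:ℂ) x).const_mul (Complex.exp (-2*(w-(u:ℂ))^2))
      have := hd1.sub hd2
      refine this.congr_deriv (Eq.symm ?_)
      ring)

lemma integral_Fp (z w : ℂ) :
    (∫ u in Iio (0:ℝ),
        (-4*(z-(u:ℂ)) * Complex.exp (-2*(z-(u:ℂ))^2) * cerfc ((Real.sqrt 2:ℂ)*(w-(u:ℂ)))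
        + (2*(Real.sqrt 2:ℂ)/(Real.sqrt Real.pi:ℂ)) * Complex.exp (-2*(z-(u:ℂ))^2)
            * Complex.exp (-2*(w-(u:ℂ))^2)))
      = -(Complex.exp (-2*z^2) * cerfc ((Real.sqrt 2:ℂ)*w))
        + (Real.sqrt 2:ℂ) * Complex.exp (-(z-w)^2) * cerfc (z+w) := by
  have hπ : (0:ℝ) < Real.sqrt Real.pi := Real.sqrt_pos.mpr Real.pi_pos
  have hπ' : ((Real.sqrt Real.pi : ℝ):ℂ) ≠ 0 := by exact_mod_cast hπ.ne'
  have hFpint := (keyH z w).1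
  have hgg_Iic : IntegrableOn
      (fun u : ℝ => Complex.exp (-2*(z-(u:ℂ))^2) * Complex.exp (-2*(w-(u:ℂ))^2)) (Iic 0) volume := by
    show Integrable _ (volume.restrict (Iic (0:ℝ)))
    apply Integrable.mono'
      ((integrable_bound (4*‖w‖) (Real.exp (2*z.im^2) * Real.exp (2*‖w‖^2))).restrict)
    · exact ((cont_g2 z).mul (cont_g2 w)).aestronglyMeasurable.restrict
    · rw [ae_restrict_iff' measurableSet_Iic]
      filter_upwards with u hu
      have hu0 : u ≤ 0 := hu
      rw [norm_mul]
      calc ‖Complex.exp (-2*(z-(u:ℂ))^2)‖ * ‖Complex.exp (-2*(w-(u:ℂ))^2)‖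
          ≤ Real.exp (2*z.im^2) * (Real.exp (2*‖w‖^2) * Real.exp (-2*u^2 - 4*‖w‖*u)) :=
            mul_le_mul (norm_g_le_const z u) (norm_g_unif le_rfl hu0) (norm_nonneg _)
              (Real.exp_nonneg _)
        _ ≤ Real.exp (2*z.im^2) * Real.exp (2*‖w‖^2)
              * ((1+|u|)^2 * Real.exp (-2*u^2 - 4*‖w‖*u)) := by
            have h1 : (1:ℝ) ≤ (1+|u|)^2 := by nlinarith [abs_nonneg u]
            nlinarith [Real.exp_pos (2*z.im^2), Real.exp_pos (2*‖w‖^2),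
              Real.exp_pos (-2*u^2 - 4*‖w‖*u),
              mul_le_mul_of_nonneg_right h1 (mul_nonneg
                (mul_nonneg (Real.exp_nonneg (2*z.im^2)) (Real.exp_nonneg (2*‖w‖^2)))
                (Real.exp_nonneg (-2*u^2 - 4*‖w‖*u)))]
  have hgg : IntegrableOn
      (fun u : ℝ => Complex.exp (-2*(z-(u:ℂ))^2) * Complex.exp (-2*(w-(u:ℂ))^2)) (Iio 0) volume :=
    hgg_Iic.mono_set Iio_subset_Iic_self
  have hFp_Iic : IntegrableOn (fun u : ℝ =>
        -4*(z-(u:ℂ)) * Complex.exp (-2*(z-(u:ℂ))^2) * cerfc ((Real.sqrt 2:ℂ)*(w-(u:ℂ)))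
        + (2*(Real.sqrt 2:ℂ)/(Real.sqrt Real.pi:ℂ)) * Complex.exp (-2*(z-(u:ℂ))^2)
            * Complex.exp (-2*(w-(u:ℂ))^2)) (Iic 0) volume :=
    IntegrableOn.congr_set_ae hFpint (Iio_ae_eq_Iic (a := (0:ℝ))).symm
  have hphi'_Iic : IntegrableOn (fun u : ℝ =>
        4*(z-(u:ℂ)) * Complex.exp (-2*(z-(u:ℂ))^2) * cerfc ((Real.sqrt 2:ℂ)*(w-(u:ℂ)))
        + (2*(Real.sqrt 2:ℂ)/(Real.sqrt Real.pi:ℂ)) * Complex.exp (-2*(z-(u:ℂ))^2)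
            * Complex.exp (-2*(w-(u:ℂ))^2)) (Iic 0) volume := by
    have heq : (fun u : ℝ =>
        4*(z-(u:ℂ)) * Complex.exp (-2*(z-(u:ℂ))^2) * cerfc ((Real.sqrt 2:ℂ)*(w-(u:ℂ)))
        + (2*(Real.sqrt 2:ℂ)/(Real.sqrt Real.pi:ℂ)) * Complex.exp (-2*(z-(u:ℂ))^2)
            * Complex.exp (-2*(w-(u:ℂ))^2))
      = fun u : ℝ =>
        (4*(Real.sqrt 2:ℂ)/(Real.sqrt Real.pi:ℂ))
          * (Complex.exp (-2*(z-(u:ℂ))^2) * Complex.exp (-2*(w-(u:ℂ))^2))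
        - (-4*(z-(u:ℂ)) * Complex.exp (-2*(z-(u:ℂ))^2) * cerfc ((Real.sqrt 2:ℂ)*(w-(u:ℂ)))
          + (2*(Real.sqrt 2:ℂ)/(Real.sqrt Real.pi:ℂ)) * Complex.exp (-2*(z-(u:ℂ))^2)
            * Complex.exp (-2*(w-(u:ℂ))^2)) := by
      funext u; ring
    rw [heq]
    exact (hgg_Iic.const_mul _).sub hFp_Iic
  have hFTC : (∫ u in Iic (0:ℝ),
        (4*(z-(u:ℂ)) * Complex.exp (-2*(z-(u:ℂ))^2) * cerfc ((Real.sqrt 2:ℂ)*(w-(u:ℂ)))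
        + (2*(Real.sqrt 2:ℂ)/(Real.sqrt Real.pi:ℂ)) * Complex.exp (-2*(z-(u:ℂ))^2)
            * Complex.exp (-2*(w-(u:ℂ))^2)))
      = Complex.exp (-2*z^2) * cerfc ((Real.sqrt 2:ℂ)*w) := by
    have h := integral_Iic_of_hasDerivAt_of_tendsto'
      (f := fun u : ℝ => Complex.exp (-2*(z-(u:ℂ))^2) * cerfc ((Real.sqrt 2:ℂ)*(w-(u:ℂ))))
      (f' := fun u : ℝ =>
        4*(z-(u:ℂ)) * Complex.exp (-2*(z-(u:ℂ))^2) * cerfc ((Real.sqrt 2:ℂ)*(w-(u:ℂ)))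
        + (2*(Real.sqrt 2:ℂ)/(Real.sqrt Real.pi:ℂ)) * Complex.exp (-2*(z-(u:ℂ))^2)
            * Complex.exp (-2*(w-(u:ℂ))^2))
      (a := (0:ℝ)) (m := 0) ?_ hphi'_Iic ?_
    · rw [h]
      simp
    · intro u _
      have hd := (hasDerivAt_cexp_neg2sq' z (u:ℂ)).mul (hasDerivAt_cerfc_shift' w (u:ℂ))
      have hd2 := hd.comp_ofReal
      refine hd2.congr_deriv (Eq.symm ?_)
      ring
    · apply squeeze_zero_norm' ?_ (tendsto_bound_atBot (4*‖z‖) (Real.exp (2*‖z‖^2) * Kc2 w))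
      filter_upwards [eventually_le_atBot (0:ℝ)] with u hu0
      rw [norm_mul]
      calc ‖Complex.exp (-2*(z-(u:ℂ))^2)‖ * ‖cerfc ((Real.sqrt 2:ℂ)*(w-(u:ℂ)))‖
          ≤ (Real.exp (2*‖z‖^2) * Real.exp (-2*u^2 - 4*‖z‖*u)) * (Kc2 w * (1+|u|)) :=
            mul_le_mul (norm_g_unif le_rfl hu0) (c2_norm_le w u) (norm_nonneg _) (by positivity)
        _ ≤ Real.exp (2*‖z‖^2) * Kc2 w * ((1+|u|)^2 * Real.exp (-2*u^2 - 4*‖z‖*u)) := by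
            have habs : (0:ℝ) ≤ |u| := abs_nonneg u
            have hKw := Kc2_ge_one w
            nlinarith [Real.exp_pos (2*‖z‖^2), Real.exp_pos (-2*u^2 - 4*‖z‖*u),
              mul_nonneg (mul_nonneg (Real.exp_nonneg (2*‖z‖^2))
                (Real.exp_nonneg (-2*u^2 - 4*‖z‖*u))) (by linarith : (0:ℝ) ≤ Kc2 w),
              mul_nonneg habs habs]
  have hggval : (∫ u in Iio (0:ℝ),
        Complex.exp (-2*(z-(u:ℂ))^2) * Complex.exp (-2*(w-(u:ℂ))^2))
      = Complex.exp (-(z-w)^2) * (((Real.sqrt Real.pi/4 : ℝ):ℂ) * cerfc (z+w)) := by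
    have hpt : ∀ u : ℝ, Complex.exp (-2*(z-(u:ℂ))^2) * Complex.exp (-2*(w-(u:ℂ))^2)
        = Complex.exp (-(z-w)^2) * Complex.exp (-4*((u:ℂ)-(z+w)/2)^2) := by
      intro u
      rw [← Complex.exp_add, ← Complex.exp_add]
      congr 1
      ring
    simp_rw [hpt]
    rw [MeasureTheory.integral_const_mul, gauss_Iio ((z+w)/2),
      show (2:ℂ)*((z+w)/2) = z+w by ring]
  calc (∫ u in Iio (0:ℝ),
        (-4*(z-(u:ℂ)) * Complex.exp (-2*(z-(u:ℂ))^2) * cerfc ((Real.sqrt 2:ℂ)*(w-(u:ℂ)))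
        + (2*(Real.sqrt 2:ℂ)/(Real.sqrt Real.pi:ℂ)) * Complex.exp (-2*(z-(u:ℂ))^2)
            * Complex.exp (-2*(w-(u:ℂ))^2)))
      = ∫ u in Iio (0:ℝ),
        (-(4*(z-(u:ℂ)) * Complex.exp (-2*(z-(u:ℂ))^2) * cerfc ((Real.sqrt 2:ℂ)*(w-(u:ℂ)))
            + (2*(Real.sqrt 2:ℂ)/(Real.sqrt Real.pi:ℂ)) * Complex.exp (-2*(z-(u:ℂ))^2)
              * Complex.exp (-2*(w-(u:ℂ))^2))
          + (4*(Real.sqrt 2:ℂ)/(Real.sqrt Real.pi:ℂ))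
            * (Complex.exp (-2*(z-(u:ℂ))^2) * Complex.exp (-2*(w-(u:ℂ))^2))) := by
        congr 1
        funext u
        ring
    _ = -(∫ u in Iic (0:ℝ),
          (4*(z-(u:ℂ)) * Complex.exp (-2*(z-(u:ℂ))^2) * cerfc ((Real.sqrt 2:ℂ)*(w-(u:ℂ)))
          + (2*(Real.sqrt 2:ℂ)/(Real.sqrt Real.pi:ℂ)) * Complex.exp (-2*(z-(u:ℂ))^2)
              * Complex.exp (-2*(w-(u:ℂ))^2)))
        + (4*(Real.sqrt 2:ℂ)/(Real.sqrt Real.pi:ℂ))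
          * ∫ u in Iio (0:ℝ), Complex.exp (-2*(z-(u:ℂ))^2) * Complex.exp (-2*(w-(u:ℂ))^2) := by
        have hneg : Integrable (fun u : ℝ =>
            -(4*(z-(u:ℂ)) * Complex.exp (-2*(z-(u:ℂ))^2) * cerfc ((Real.sqrt 2:ℂ)*(w-(u:ℂ)))
              + (2*(Real.sqrt 2:ℂ)/(Real.sqrt Real.pi:ℂ)) * Complex.exp (-2*(z-(u:ℂ))^2)
                * Complex.exp (-2*(w-(u:ℂ))^2))) (volume.restrict (Iio (0:ℝ))) :=
          (hphi'_Iic.mono_set Iio_subset_Iic_self).neg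
        have hcm : Integrable (fun u : ℝ =>
            (4*(Real.sqrt 2:ℂ)/(Real.sqrt Real.pi:ℂ))
              * (Complex.exp (-2*(z-(u:ℂ))^2) * Complex.exp (-2*(w-(u:ℂ))^2)))
            (volume.restrict (Iio (0:ℝ))) := hgg.const_mul _
        rw [integral_add hneg hcm, integral_neg, MeasureTheory.integral_const_mul,
          integral_Iic_eq_integral_Iio]
    _ = -(Complex.exp (-2*z^2) * cerfc ((Real.sqrt 2:ℂ)*w))
        + (Real.sqrt 2:ℂ) * Complex.exp (-(z-w)^2) * cerfc (z+w) := by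
        rw [hFTC, hggval]
        have hcoef : (4*(Real.sqrt 2:ℂ)/(Real.sqrt Real.pi:ℂ))
            * ((Real.sqrt Real.pi/4 : ℝ):ℂ) = (Real.sqrt 2:ℂ) := by
          push_cast
          field_simp
        rw [show (4*(Real.sqrt 2:ℂ)/(Real.sqrt Real.pi:ℂ))
            * (Complex.exp (-(z-w)^2) * (((Real.sqrt Real.pi/4 : ℝ):ℂ) * cerfc (z+w)))
          = ((4*(Real.sqrt 2:ℂ)/(Real.sqrt Real.pi:ℂ)) * ((Real.sqrt Real.pi/4 : ℝ):ℂ))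
            * (Complex.exp (-(z-w)^2) * cerfc (z+w)) by ring, hcoef]
        ring

end Helpers

theorem stmt11 (z w : ℂ) :
    HasDerivAt (fun z => kappaHat z w)
      (2 * (z - w) * kappaHat z w + cerfc (z + w)
        - (1 / (Real.sqrt 2 : ℂ)) * Complex.exp ((z - w) ^ 2 - 2 * z ^ 2) *
            cerfc ((Real.sqrt 2 : ℂ) * w)) z := by
  have hs2 : ((Real.sqrt 2 : ℝ):ℂ) ≠ 0 := by exact_mod_cast sqrt2_pos.ne'
  obtain ⟨-, hH⟩ := keyH z w
  rw [integral_Fp z w] at hH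
  have hfE : HasDerivAt (fun x => fEdge x w)
      ((1/(Real.sqrt 2:ℂ)) * (-(Complex.exp (-2*z^2) * cerfc ((Real.sqrt 2:ℂ)*w))
        + (Real.sqrt 2:ℂ) * Complex.exp (-(z-w)^2) * cerfc (z+w))) z := by
    simp only [fEdge]
    exact hH.const_mul _
  have hkE : HasDerivAt (fun x : ℂ => Complex.exp ((x-w)^2))
      (2*(z-w)*Complex.exp ((z-w)^2)) z := by
    have h1 : HasDerivAt (fun x : ℂ => (x-w)^2) (2*(z-w)) z := by
      have := ((hasDerivAt_id z).sub_const w).pow 2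
      refine this.congr_deriv (Eq.symm ?_)
      simp only [id_eq]
      ring
    have := h1.cexp
    refine this.congr_deriv (Eq.symm ?_)
    ring
  have hsimp : (1/(Real.sqrt 2:ℂ)) * (-(Complex.exp (-2*z^2) * cerfc ((Real.sqrt 2:ℂ)*w))
        + (Real.sqrt 2:ℂ) * Complex.exp (-(z-w)^2) * cerfc (z+w))
      = -((1/(Real.sqrt 2:ℂ)) * (Complex.exp (-2*z^2) * cerfc ((Real.sqrt 2:ℂ)*w)))
        + Complex.exp (-(z-w)^2) * cerfc (z+w) := by
    field_simp
  rw [hsimp] at hfE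
  have hprod := hkE.mul hfE
  have hfun : (fun x => kappaHat x w) = fun x => Complex.exp ((x-w)^2) * fEdge x w := by
    funext x
    simp only [kappaHat]
  rw [hfun]
  refine hprod.congr_deriv (Eq.symm ?_)
  have e1 : Complex.exp ((z-w)^2) * Complex.exp (-(z-w)^2) = 1 := by
    rw [← Complex.exp_add]
    simp
  have e2 : Complex.exp ((z-w)^2) * Complex.exp (-2*z^2) = Complex.exp ((z-w)^2 - 2*z^2) := by
    rw [← Complex.exp_add]
    congr 1
    ring
  have hk : kappaHat z w = Complex.exp ((z-w)^2) * fEdge z w := rfl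
  rw [hk, ← e2]
  linear_combination (-(cerfc (z+w))) * e1
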